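/- Let S be a connected scheme, and let ι : W → ⊔_{h∈H} S be a morphism of S-schemes which is both an open immersion and finite (for a finite set H). Then W ≅ ⊔_{h∈H'} S for some subset H' ⊆ H. -/

import Mathlib

open AlgebraicGeometry CategoryTheory CategoryTheory.Limits

open Topology

universe u

lemma exists_sigmaι_eq {ι : Type u} (f : ι → Scheme.{u}) (x : (∐ f : Scheme.{u})) :
    ∃ i y, (Sigma.ι f i).base y = x := by
  obtain ⟨⟨i, y⟩, rfl⟩ := (sigmaMk f).surjective x
  exact ⟨i, y, (sigmaMk_mk f i y).symm⟩

/-- Let `S` be a connected scheme and let `ι : W ⟶ ⊔_{h ∈ H} S` be a morphism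
of schemes which is both an open immersion and finite, where `⊔_{h ∈ H} S` is
the constant `S`-scheme on a finite set `H` (the coproduct of `#H` copies of
`S`). Then `W ≅ ⊔_{h ∈ H'} S` for some subset `H' ⊆ H`. -/
theorem clopen_in_constant_scheme_is_constant (S : Scheme.{u}) [ConnectedSpace S]
    (H : Type u) [Finite H] (W : Scheme.{u})
    (ι : W ⟶ ∐ (fun _ : H => S)) [IsOpenImmersion ι] [IsFinite ι] :
    ∃ H' : Set H, Nonempty (W ≅ ∐ (fun _ : H' => S)) := by
  classical
  have hci : IsClosedImmersion ι :=
    (IsClosedImmersion.iff_isFinite_and_mono ι).mpr ⟨‹_›, inferInstance⟩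
  set U : Set (∐ fun _ : H => S : Scheme) := Set.range ι.base with hU
  have hUopen : IsOpen U := ι.isOpenEmbedding.isOpen_range
  have hUclosed : IsClosed U := ι.isClosedEmbedding.isClosed_range
  set H' : Set H := {h | Set.range (Sigma.ι (fun _ : H => S) h).base ⊆ U} with hH'
  have key : ∀ h : H, (Sigma.ι (fun _ : H => S) h).base ⁻¹' U = ∅ ∨
      (Sigma.ι (fun _ : H => S) h).base ⁻¹' U = Set.univ := by
    intro h
    exact isClopen_iff.mp
      ⟨hUclosed.preimage (Sigma.ι (fun _ : H => S) h).continuous,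
       hUopen.preimage (Sigma.ι (fun _ : H => S) h).continuous⟩
  let j : (∐ fun _ : H' => S) ⟶ (∐ fun _ : H => S) :=
    Sigma.desc fun h => Sigma.ι (fun _ : H => S) h.1
  have hj : ∀ h : H', Sigma.ι (fun _ : H' => S) h ≫ j = Sigma.ι (fun _ : H => S) h.1 :=
    fun h => Sigma.ι_desc _ _
  have hcomm : ∀ p : Σ _ : H', S,
      j.base (sigmaMk (fun _ : H' => S) p)
        = sigmaMk (fun _ : H => S) (Sigma.map Subtype.val (fun _ => id) p) := by
    rintro ⟨h, x⟩
    have : j.base ((Sigma.ι (fun _ : H' => S) h).base x)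
        = (Sigma.ι (fun _ : H => S) h.1).base x := by
      rw [← Scheme.Hom.comp_apply, hj h]
    simpa [sigmaMk_mk, Sigma.map] using this
  have hjfun : ⇑j.base = ⇑(sigmaMk (fun _ : H => S)) ∘ Sigma.map Subtype.val (fun _ => id)
      ∘ ⇑(sigmaMk (fun _ : H' => S)).symm := by
    funext x
    obtain ⟨p, rfl⟩ := (sigmaMk (fun _ : H' => S)).surjective x
    simp [hcomm p]
  have hjo : IsOpenEmbedding j.base := by
    rw [hjfun]
    exact (sigmaMk (fun _ : H => S)).isOpenEmbedding.comp
      (((Topology.isOpenEmbedding_sigmaMap Subtype.val_injective).mpr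
        (fun _ => Topology.IsOpenEmbedding.id)).comp
        (sigmaMk (fun _ : H' => S)).symm.isOpenEmbedding)
  have hstalk : ∀ x, IsIso (j.stalkMap x) := by
    intro x
    obtain ⟨h, y, rfl⟩ := exists_sigmaι_eq (fun _ : H' => S) x
    have h1 : (Sigma.ι (fun _ : H' => S) h ≫ j).stalkMap y
        = j.stalkMap ((Sigma.ι (fun _ : H' => S) h).base y)
          ≫ (Sigma.ι (fun _ : H' => S) h).stalkMap y :=
      Scheme.Hom.stalkMap_comp _ _ _
    have h2 : IsIso ((Sigma.ι (fun _ : H' => S) h ≫ j).stalkMap y) := by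
      rw [Scheme.Hom.stalkMap_congr_hom _ _ (hj h)]
      infer_instance
    rw [h1] at h2
    exact @IsIso.of_isIso_comp_right _ _ _ _ _ _ ((Sigma.ι (fun _ : H' => S) h).stalkMap y) _ h2
  have : IsOpenImmersion j := IsOpenImmersion.of_isIso_stalkMap j hjo
  have hrange : Set.range j.base = Set.range ι.base := by
    apply Set.Subset.antisymm
    · rintro _ ⟨p, rfl⟩
      obtain ⟨h, y, rfl⟩ := exists_sigmaι_eq (fun _ : H' => S) p
      have : j.base ((Sigma.ι (fun _ : H' => S) h).base y)
          = (Sigma.ι (fun _ : H => S) h.1).base y := by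
        rw [← Scheme.Hom.comp_apply, hj h]
      rw [this]
      exact h.2 ⟨y, rfl⟩
    · rintro x hx
      obtain ⟨h, y, rfl⟩ := exists_sigmaι_eq (fun _ : H => S) x
      have hne : (Sigma.ι (fun _ : H => S) h).base ⁻¹' U ≠ ∅ :=
        Set.nonempty_iff_ne_empty.mp ⟨y, hx⟩
      have huniv := (key h).resolve_left hne
      have hmem : h ∈ H' := by
        rintro _ ⟨z, rfl⟩
        have : z ∈ (Sigma.ι (fun _ : H => S) h).base ⁻¹' U := huniv ▸ Set.mem_univ z
        exact this
      refine ⟨(Sigma.ι (fun _ : H' => S) ⟨h, hmem⟩).base y, ?_⟩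
      rw [← Scheme.Hom.comp_apply, hj ⟨h, hmem⟩]
  exact ⟨H', ⟨(IsOpenImmersion.isoOfRangeEq j ι hrange).symm⟩⟩
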